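/- Expanding the tropical product: for c ∈ ℚ and d_n ≤ d_{n−1} ≤ ... ≤ d_{r+1} in ℚ, the function x ↦ c + r·x + Σ_{i=r+1}^{n} min(x, d_i) equals x ↦ min_{r ≤ j ≤ n} (b_j + j·x) where b_j = c + d_n + d_{n−1} + ... + d_{j+1} (and b_n = c). -/
import Mathlib

lemma Icc_int_insert_top (a b : ℤ) (h : a ≤ b + 1) :
    Finset.Icc a (b + 1) = insert (b + 1) (Finset.Icc a b) := by
  ext k; simp only [Finset.mem_Icc, Finset.mem_insert]; omega

lemma trop_aux (r : ℤ) : ∀ n : ℤ, r ≤ n → ∀ (c : ℚ) (d : ℤ → ℚ),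
    (∀ i j : ℤ, r + 1 ≤ i → i ≤ j → j ≤ n → d j ≤ d i) →
    ∀ (hne : (Finset.Icc r n).Nonempty) (x : ℚ),
      c + (r : ℚ) * x + ∑ i ∈ Finset.Icc (r + 1) n, min x (d i) =
      (Finset.Icc r n).inf' hne
        (fun j => (c + ∑ i ∈ Finset.Icc (j + 1) n, d i) + (j : ℚ) * x) := by
  refine Int.le_induction ?_ ?_
  · intro c d _ _ x
    have h1 : Finset.Icc (r + 1) r = ∅ := by
      apply Finset.Icc_eq_empty; omega
    have h2 : Finset.Icc r r = {r} := Finset.Icc_self r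
    rw [h1]
    simp [h2]
  · intro n hn IH c d hd _ x
    have h1 : Finset.Icc (r + 1) (n + 1) = insert (n + 1) (Finset.Icc (r + 1) n) :=
      Icc_int_insert_top _ _ (by omega)
    have h2 : Finset.Icc r (n + 1) = insert (n + 1) (Finset.Icc r n) :=
      Icc_int_insert_top _ _ (by omega)
    have hmem : (n + 1 : ℤ) ∉ Finset.Icc (r + 1) n := by simp
    rw [h1, Finset.sum_insert hmem]
    have hne : (Finset.Icc r n).Nonempty := Finset.nonempty_Icc.mpr hn
    have hIH := IH (c + d (n + 1)) d
      (fun i j hi hij hj => hd i j hi hij (by omega)) hne x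
    -- rewrite RHS
    have hrhs : (Finset.Icc r (n+1)).inf' (Finset.nonempty_Icc.mpr (by omega : r ≤ n + 1))
        (fun j => (c + ∑ i ∈ Finset.Icc (j + 1) (n+1), d i) + (j : ℚ) * x)
        = min ((c + ∑ i ∈ Finset.Icc ((n+1) + 1) (n+1), d i) + ((n+1 : ℤ) : ℚ) * x)
            ((Finset.Icc r n).inf' hne
              (fun j => (c + ∑ i ∈ Finset.Icc (j + 1) (n+1), d i) + (j : ℚ) * x)) := by
      rw [Finset.inf'_congr (t := insert (n+1) (Finset.Icc r n)) _ h2 (fun _ _ => rfl)]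
      exact Finset.inf'_insert hne _
    rw [hrhs]
    have hempty : Finset.Icc ((n+1 : ℤ) + 1) (n+1) = ∅ := by
      apply Finset.Icc_eq_empty; omega
    rw [hempty, Finset.sum_empty]
    have hsum : ∀ j ∈ Finset.Icc r n,
        (c + ∑ i ∈ Finset.Icc (j + 1) (n+1), d i) + (j : ℚ) * x
        = ((c + d (n+1)) + ∑ i ∈ Finset.Icc (j + 1) n, d i) + (j : ℚ) * x := by
      intro j hj
      simp only [Finset.mem_Icc] at hj
      rw [Icc_int_insert_top _ _ (by omega), Finset.sum_insert (by simp)]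
      ring
    rw [Finset.inf'_congr (t := Finset.Icc r n) _ rfl hsum, ← hIH]
    -- d (n+1) is the smallest
    have hdmin : ∀ i ∈ Finset.Icc (r + 1) n, d (n + 1) ≤ d i := by
      intro i hi
      simp only [Finset.mem_Icc] at hi
      exact hd i (n+1) hi.1 (by omega) le_rfl
    rcases le_total x (d (n + 1)) with hx | hx
    · have hminx : min x (d (n+1)) = x := min_eq_left hx
      have hall : ∀ i ∈ Finset.Icc (r + 1) n, min x (d i) = x := fun i hi =>
        min_eq_left (hx.trans (hdmin i hi))
      have hcard : (Finset.Icc (r+1) n).card = (n - r).toNat := by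
        rw [Int.card_Icc]; congr 1; omega
      have hc : ((n - r).toNat : ℚ) = (n : ℚ) - r := by
        have h := congrArg (fun z : ℤ => (z : ℚ))
          (Int.toNat_of_nonneg (show (0:ℤ) ≤ n - r by omega))
        push_cast at h; linarith
      rw [Finset.sum_congr rfl hall, hminx, Finset.sum_const, hcard, nsmul_eq_mul, hc]
      rw [min_eq_left]
      · push_cast; ring
      · push_cast; linarith
    · have hminx : min x (d (n+1)) = d (n+1) := min_eq_right hx
      rw [hminx, min_eq_right]
      · ring
      · have hbound : ∑ i ∈ Finset.Icc (r + 1) n, min x (d i)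
            ≤ ∑ _i ∈ Finset.Icc (r + 1) n, x :=
          Finset.sum_le_sum (fun i _ => min_le_left _ _)
        have hcard : (Finset.Icc (r+1) n).card = (n - r).toNat := by
          rw [Int.card_Icc]; congr 1; omega
        have hc : ((n - r).toNat : ℚ) = (n : ℚ) - r := by
          have h := congrArg (fun z : ℤ => (z : ℚ))
            (Int.toNat_of_nonneg (show (0:ℤ) ≤ n - r by omega))
          push_cast at h; linarith
        rw [Finset.sum_const, hcard, nsmul_eq_mul, hc] at hbound
        push_cast; linarith

/-- Expanding a tropical product of linear factors with sorted roots gives the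
tropical polynomial with coefficients `b j = c + ∑_{i=j+1}^n d i`. -/
theorem tropical_product_expansion (r n : ℤ) (hrn : r ≤ n) (c : ℚ) (d : ℤ → ℚ)
    (hd : ∀ i j : ℤ, r + 1 ≤ i → i ≤ j → j ≤ n → d j ≤ d i) :
    ∀ x : ℚ,
      c + (r : ℚ) * x + ∑ i ∈ Finset.Icc (r + 1) n, min x (d i) =
      (Finset.Icc r n).inf' (Finset.nonempty_Icc.mpr hrn)
        (fun j => (c + ∑ i ∈ Finset.Icc (j + 1) n, d i) + (j : ℚ) * x) := by
  exact trop_aux r n hrn c d hd _
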